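/- Let α_n : [0,1] → [0,1] be piecewise constant functions converging pointwise to a Borel function α, and let X^n be the corresponding ISBM solutions started at x with a common Brownian motion B. Then the family of laws of the pairs (X^n, B) on C([0,1], ℝ²) is tight. -/

import Mathlib

open MeasureTheory ProbabilityTheory Filter Set

noncomputable section

namespace ISBM

variable {Ω : Type*}

/-- The symmetric sign function, with `sgn 0 = 0`. -/
def sgn (x : ℝ) : ℝ := if 0 < x then 1 else if x < 0 then -1 else 0

/-- `B` is a standard Brownian motion started at `0` under `μ`:
measurable, a.s. continuous paths starting from `0`, Gaussian increments,
independent increments. -/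
def IsBrownianMotion {mΩ : MeasurableSpace Ω} (μ : Measure Ω) (B : ℝ → Ω → ℝ) : Prop :=
  (∀ t, Measurable (B t)) ∧
  (∀ᵐ ω ∂μ, B 0 ω = 0 ∧ Continuous fun t => B t ω) ∧
  (∀ s t : ℝ, 0 ≤ s → s ≤ t →
    Measure.map (fun ω => B t ω - B s ω) μ = gaussianReal 0 ((t - s).toNNReal)) ∧
  (∀ n : ℕ, ∀ t : ℕ → ℝ, 0 ≤ t 0 → Monotone t →
    iIndepFun
      (fun i : Fin n => fun ω => B (t (i + 1)) ω - B (t i) ω) μ)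

/-- `B` is a Brownian motion with respect to the filtration `F`. -/
def IsFBrownianMotion {mΩ : MeasurableSpace Ω} (μ : Measure Ω) (F : Filtration ℝ mΩ)
    (B : ℝ → Ω → ℝ) : Prop :=
  IsBrownianMotion μ B ∧ Adapted F B ∧
  ∀ s t : ℝ, 0 ≤ s → s ≤ t →
    Indep (MeasurableSpace.comap (fun ω => B t ω - B s ω) inferInstance) (F s) μ

/-- `I` is (a version of) the stochastic integral `∫ H dY`, characterised as the limit in
probability of left-point Riemann sums along dyadic partitions. -/
def IsStochIntegral {mΩ : MeasurableSpace Ω} (μ : Measure Ω) (H Y I : ℝ → Ω → ℝ) : Prop :=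
  (∀ ω, I 0 ω = 0) ∧
  ∀ t : ℝ, 0 ≤ t → TendstoInMeasure μ
    (fun n : ℕ => fun ω => ∑ i ∈ Finset.range (2 ^ n),
      H (t * i / 2 ^ n) ω * (Y (t * (i + 1) / 2 ^ n) ω - Y (t * i / 2 ^ n) ω))
    atTop (I t)

/-- The (Stieltjes) measure of the function `R` is carried by the set `Z`:
`R` is locally constant away from `Z` (on the positive half-line). -/
def CarriedBy (R : ℝ → ℝ) (Z : Set ℝ) : Prop :=
  ∀ s : ℝ, 0 ≤ s → s ∉ Z → ∃ ε > 0, ∀ u ∈ Ioo (s - ε) (s + ε), R u = R s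

/-- `L` is (a version of) the symmetric local time at `0` of `X`, characterised by the
symmetric Tanaka formula: `L ω` is a continuous nondecreasing (Stieltjes) function starting
at `0`, carried by the zero set of `X`, and
`|X t| = |X 0| + ∫_0^t sgn(X s) dX s + L t`. -/
def IsSymmLocalTimeAtZero {mΩ : MeasurableSpace Ω} (μ : Measure Ω) (X : ℝ → Ω → ℝ)
    (L : Ω → StieltjesFunction ℝ) : Prop :=
  (∀ᵐ ω ∂μ, (L ω) 0 = 0 ∧ (Continuous fun s => L ω s) ∧
    CarriedBy (fun s => L ω s) {s : ℝ | X s ω = 0}) ∧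
  ∃ I : ℝ → Ω → ℝ, IsStochIntegral μ (fun s ω => sgn (X s ω)) X I ∧
    ∀ t : ℝ, 0 ≤ t → ∀ᵐ ω ∂μ, |X t ω| = |X 0 ω| + I t ω + (L ω) t

/-- `X` is a solution of the inhomogeneous skew Brownian motion equation
`X t = x + B t + ∫_0^t (2 α s - 1) dL⁰_s(X)`, with symmetric local time `L`. -/
def IsISBMSolution {mΩ : MeasurableSpace Ω} (μ : Measure Ω) (α : ℝ → ℝ) (x : ℝ)
    (B X : ℝ → Ω → ℝ) (L : Ω → StieltjesFunction ℝ) : Prop :=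
  (∀ᵐ ω ∂μ, Continuous fun t => X t ω) ∧
  IsSymmLocalTimeAtZero μ X L ∧
  ∀ t : ℝ, 0 ≤ t → ∀ᵐ ω ∂μ,
    X t ω = x + B t ω + ∫ s in Ioc (0:ℝ) t, (2 * α s - 1) ∂(L ω).measure

/-- `M` is a continuous local martingale for the filtration `F`. -/
def IsContLocalMartingale {mΩ : MeasurableSpace Ω} (μ : Measure Ω) (F : Filtration ℝ mΩ)
    (M : ℝ → Ω → ℝ) : Prop :=
  (∀ᵐ ω ∂μ, Continuous fun t => M t ω) ∧
  ∃ τ : ℕ → Ω → ℝ, (∀ n, IsStoppingTime F (fun ω => (τ n ω : WithTop ℝ))) ∧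
    (∀ᵐ ω ∂μ, Tendsto (fun n => τ n ω) atTop atTop) ∧
    ∀ n, Martingale (fun t ω => M (min t (τ n ω)) ω) F μ

/-- `Y` is a continuous semimartingale: local martingale plus adapted continuous
finite-variation part. -/
def IsContSemimartingale {mΩ : MeasurableSpace Ω} (μ : Measure Ω) (F : Filtration ℝ mΩ)
    (Y : ℝ → Ω → ℝ) : Prop :=
  ∃ M A : ℝ → Ω → ℝ, IsContLocalMartingale μ F M ∧ Adapted F A ∧
    (∀ᵐ ω ∂μ, A 0 ω = 0 ∧ (Continuous fun t => A t ω) ∧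
      ∀ t : ℝ, 0 ≤ t → BoundedVariationOn (fun s => A s ω) (Icc 0 t)) ∧
    ∀ t ω, Y t ω = M t ω + A t ω

/-- The last zero of `Y (· ω)` before time `t` (with `sup ∅ = 0`). -/
def lastZero (Y : ℝ → Ω → ℝ) (t : ℝ) (ω : Ω) : ℝ :=
  sSup ({0} ∪ {s : ℝ | s ∈ Icc 0 t ∧ Y s ω = 0})

/-- `pk` is (a version of) the predictable projection of the bounded progressive
process `k`: it is adapted, left-continuous, and at every deterministic time `t`,
`pk t = E[k t | F_{t⁻}]`. -/
def IsPredictableProjection {mΩ : MeasurableSpace Ω} (μ : Measure Ω) (F : Filtration ℝ mΩ)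
    (k pk : ℝ → Ω → ℝ) : Prop :=
  Adapted F pk ∧
  (∀ᵐ ω ∂μ, ∀ t : ℝ, ContinuousWithinAt (fun s => pk s ω) (Iio t) t) ∧
  ∀ t : ℝ, 0 < t → pk t =ᵐ[μ] μ[k t | ⨆ s ∈ Iio t, F s]

/-- `Q` is the quadratic variation process of `X` (limit in probability of sums of
squared increments along dyadic partitions). -/
def HasQuadraticVariation {mΩ : MeasurableSpace Ω} (μ : Measure Ω) (X Q : ℝ → Ω → ℝ) : Prop :=
  ∀ t : ℝ, 0 ≤ t → TendstoInMeasure μ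
    (fun n : ℕ => fun ω => ∑ i ∈ Finset.range (2 ^ n),
      (X (t * (i + 1) / 2 ^ n) ω - X (t * i / 2 ^ n) ω) ^ 2)
    atTop (Q t)

/-- The intervals `(g n, d n)` form the excursion decomposition of the path `Y (· ω)`
away from `0`. -/
def IsExcursionDecomposition (Y : ℝ → Ω → ℝ) (g d : ℕ → Ω → ℝ) (ω : Ω) : Prop :=
  ({t : ℝ | 0 ≤ t ∧ Y t ω ≠ 0} = ⋃ n, Ioo (g n ω) (d n ω)) ∧
  (∀ n, 0 ≤ g n ω ∧ g n ω < d n ω ∧ Y (g n ω) ω = 0 ∧ Y (d n ω) ω = 0) ∧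
  (Pairwise fun m n => Disjoint (Ioo (g m ω) (d m ω)) (Ioo (g n ω) (d n ω)))

/-- The process obtained by attaching the sign `ξ n` to the excursion interval
`(g n, d n)`. -/
def excursionSign (g d : ℕ → Ω → ℝ) (ξ : ℕ → Ω → ℝ) (t : ℝ) (ω : Ω) : ℝ :=
  ∑' n, Set.indicator (Ioo (g n ω) (d n ω)) (fun _ => ξ n ω) t

/-- Number of upcrossings of the interval `[0, ε]` by the path `Y (· ω)` before time `t`. -/
def upcrossingCount (Y : ℝ → Ω → ℝ) (t ε : ℝ) (ω : Ω) : ℕ :=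
  sSup {n : ℕ | ∃ s u : ℕ → ℝ,
    (∀ i < n, 0 ≤ s i ∧ s i < u i ∧ u i ≤ t ∧ Y (s i) ω = 0 ∧ ε ≤ Y (u i) ω) ∧
    ∀ i j, i < j → j < n → u i < s j}

/-- The transition density `p^α(s,t;x,y)` of the inhomogeneous skew Brownian motion. -/
def pISBM (α : ℝ → ℝ) (s t x y : ℝ) : ℝ :=
  (∫ u in Ioo (0:ℝ) (t - s),
    ((1 + sgn y * (2 * α (s + u) - 1)) / 2) * (|y| / Real.pi) *
      (Real.exp (-(y ^ 2) / (2 * (t - (s + u)))) /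
        (Real.sqrt u * (t - s - u) ^ ((3 : ℝ) / 2))) * Real.exp (-(x ^ 2) / (2 * u))) +
  (1 / Real.sqrt (2 * Real.pi * (t - s))) *
    (Real.exp (-((y - x) ^ 2) / (2 * (t - s))) -
      Real.exp (-((y + x) ^ 2) / (2 * (t - s))) * (if 0 < x * y then 1 else 0))

/-- `X` is a nonnegative (local) submartingale of class `Σ`. -/
def IsClassSigma {mΩ : MeasurableSpace Ω} (μ : Measure Ω) (F : Filtration ℝ mΩ)
    (X : ℝ → Ω → ℝ) : Prop :=
  (∀ t ω, 0 ≤ X t ω) ∧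
  ∃ N A : ℝ → Ω → ℝ, IsContLocalMartingale μ F N ∧
    (∀ t ω, X t ω = N t ω + A t ω) ∧
    (∀ᵐ ω ∂μ, A 0 ω = 0 ∧ (Continuous fun t => A t ω) ∧
      MonotoneOn (fun t => A t ω) (Ici 0) ∧
      CarriedBy (fun s => A s ω) {s : ℝ | X s ω = 0})


open scoped Classical in
/-- The path `s ↦ (X s ω, B s ω)` on `[0,1]`, as a continuous map (junk value if the
path is not continuous). -/
def pathPair (X B : ℝ → Ω → ℝ) (ω : Ω) : C(Icc (0:ℝ) 1, ℝ × ℝ) :=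
  if h : Continuous (fun s : Icc (0:ℝ) 1 => (X (s : ℝ) ω, B (s : ℝ) ω)) then ⟨_, h⟩
  else ContinuousMap.const _ (0, 0)



section AuxTightness

open scoped ENNReal NNReal

theorem exists_compact_measure_compl_le {E : Type*} [MetricSpace E] [CompleteSpace E]
    [TopologicalSpace.SeparableSpace E] [Nonempty E]
    {mE : MeasurableSpace E} [OpensMeasurableSpace E]
    (ν : Measure E) [IsFiniteMeasure ν] {ε : ℝ≥0∞} (hε : 0 < ε) :
    ∃ K : Set E, IsCompact K ∧ ν Kᶜ ≤ ε := by
  obtain ⟨d, hd⟩ := TopologicalSpace.exists_dense_seq E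
  set U : ℕ → ℕ → Set E := fun k m => ⋃ i ∈ Finset.range m, Metric.closedBall (d i) (1/(k+1))
    with hU
  have hUclosed : ∀ k m, IsClosed (U k m) := fun k m =>
    (Finset.range m).finite_toSet.isClosed_biUnion fun i _ => Metric.isClosed_closedBall
  have hUmono : ∀ k, Monotone (U k) := by
    intro k m m' hmm'
    refine Set.iUnion₂_mono' fun i hi => ⟨i, ?_, subset_rfl⟩
    simp only [Finset.mem_range] at hi ⊢; omega
  have hUuniv : ∀ k, (⋃ m, U k m) = univ := by
    intro k; ext y; simp only [Set.mem_iUnion, Set.mem_univ, iff_true]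
    obtain ⟨i, hi⟩ := hd.exists_dist_lt y (show 0 < 1/((k:ℝ)+1) by positivity)
    exact ⟨i+1, Set.mem_biUnion (Finset.self_mem_range_succ i)
      (Metric.mem_closedBall.2 hi.le)⟩
  rcases eq_or_ne (ν univ) 0 with hν0 | hν0
  · exact ⟨∅, isCompact_empty, by rw [Set.compl_empty, hν0]; exact zero_le⟩
  · have hk : ∀ k : ℕ, ∃ m, ν univ - ε/2/2^k < ν (U k m) := by
      intro k
      have hc0 : ε/2/2^k ≠ 0 :=
        ENNReal.div_ne_zero.mpr ⟨ENNReal.div_ne_zero.mpr ⟨hε.ne', ENNReal.ofNat_ne_top⟩,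
          ENNReal.pow_ne_top ENNReal.ofNat_ne_top⟩
      have hlt : ν univ - ε/2/2^k < ν univ :=
        ENNReal.sub_lt_self (measure_ne_top ν univ) hν0 hc0
      have htd := tendsto_measure_iUnion_atTop (μ := ν) (hUmono k)
      rw [hUuniv k] at htd
      exact (htd.eventually (lt_mem_nhds hlt)).exists
    choose m hm using hk
    refine ⟨⋂ k, U k (m k), ?_, ?_⟩
    · refine TotallyBounded.isCompact_of_isClosed ?_
        (isClosed_iInter fun k => hUclosed k (m k))
      rw [Metric.totallyBounded_iff]
      intro r hr
      obtain ⟨k, hk⟩ := exists_nat_one_div_lt hr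
      refine ⟨d '' (Finset.range (m k) : Set ℕ), ((Finset.range (m k)).finite_toSet.image _), ?_⟩
      intro y hy
      have hymem : y ∈ U k (m k) := Set.mem_iInter.1 hy k
      simp only [hU, Set.mem_iUnion] at hymem
      obtain ⟨i, hi, hyi⟩ := hymem
      refine Set.mem_biUnion (Set.mem_image_of_mem d hi) ?_
      rw [Metric.mem_ball]
      exact lt_of_le_of_lt (Metric.mem_closedBall.1 hyi) hk
    · rw [Set.compl_iInter]
      refine le_trans (measure_iUnion_le _) ?_
      have hbound : ∀ k, ν ((U k (m k))ᶜ) ≤ ε/2/2^k := by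
        intro k
        rcases le_or_gt (ν univ) (ε/2/2^k) with hle | hgt
        · exact le_trans (measure_mono (Set.subset_univ _)) hle
        · rw [measure_compl (hUclosed k (m k)).measurableSet (measure_ne_top _ _)]
          rw [tsub_le_iff_right]
          have := ENNReal.lt_add_of_sub_lt_right (Or.inl (measure_ne_top ν univ)) (hm k)
          rw [add_comm]; exact this.le
      refine le_trans (ENNReal.tsum_le_tsum hbound) ?_
      have : ∀ k : ℕ, ε/2/2^k = (ε/2) * (2⁻¹)^k := by
        intro k; rw [div_eq_mul_inv, ENNReal.inv_pow]
      rw [tsum_congr this, ENNReal.tsum_mul_left, ENNReal.tsum_geometric,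
        ENNReal.one_sub_inv_two, inv_inv]
      exact (ENNReal.div_mul_cancel two_ne_zero ENNReal.ofNat_ne_top).le

theorem compact_unif_equicont {K : Set C(Icc (0:ℝ) 1, ℝ)} (hK : IsCompact K)
    {ε : ℝ} (hε : 0 < ε) :
    ∃ δ > 0, ∀ a b : Icc (0:ℝ) 1, dist a b < δ → ∀ g ∈ K, |g a - g b| < ε := by
  classical
  have hcov : K ⊆ ⋃ g ∈ K, Metric.ball g (ε/3) := fun g hg =>
    Set.mem_biUnion hg (Metric.mem_ball_self (by positivity))
  obtain ⟨t, hts, htfin, htcov⟩ :=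
    hK.elim_finite_subcover_image (fun g _ => Metric.isOpen_ball) hcov
  have hmod : ∀ g : C(Icc (0:ℝ) 1, ℝ), ∃ δ, 0 < δ ∧ ∀ a b : Icc (0:ℝ) 1,
      dist a b < δ → dist (g a) (g b) < ε/3 := by
    intro g
    obtain ⟨δ, hδ0, hδ⟩ := Metric.uniformContinuous_iff.1
      (CompactSpace.uniformContinuous_of_continuous g.continuous) (ε/3) (by positivity)
    exact ⟨δ, hδ0, fun a b hab => hδ hab⟩
  choose dlt hdlt0 hdlt using hmod
  by_cases hne : t.Nonempty
  · have hTne : htfin.toFinset.Nonempty := by rwa [Set.Finite.toFinset_nonempty]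
    refine ⟨htfin.toFinset.inf' hTne dlt, ?_, ?_⟩
    · exact (Finset.lt_inf'_iff hTne).2 fun g _ => hdlt0 g
    · intro a b hab g hg
      have := htcov hg
      simp only [Set.mem_iUnion] at this
      obtain ⟨g₀, hg₀t, hgball⟩ := this
      have h1 : dist g g₀ < ε/3 := by rwa [Metric.mem_ball] at hgball
      have h2 : dist a b < dlt g₀ :=
        lt_of_lt_of_le hab (Finset.inf'_le _ (by rwa [Set.Finite.mem_toFinset]))
      have e1 : |g a - g₀ a| < ε/3 := by
        rw [← Real.dist_eq]
        exact lt_of_le_of_lt (ContinuousMap.dist_apply_le_dist a) h1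
      have e2 : |g₀ b - g b| < ε/3 := by
        rw [abs_sub_comm, ← Real.dist_eq]
        exact lt_of_le_of_lt (ContinuousMap.dist_apply_le_dist b) h1
      have e3 : |g₀ a - g₀ b| < ε/3 := by
        have := hdlt g₀ a b h2
        rwa [Real.dist_eq] at this
      have : |g a - g b| ≤ |g a - g₀ a| + |g₀ a - g₀ b| + |g₀ b - g b| := by
        have := abs_sub_le (g a) (g₀ a) (g b)
        have h4 := abs_sub_le (g₀ a) (g₀ b) (g b)
        calc |g a - g b| ≤ |g a - g₀ a| + |g₀ a - g b| := abs_sub_le _ _ _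
          _ ≤ |g a - g₀ a| + (|g₀ a - g₀ b| + |g₀ b - g b|) := by
              exact add_le_add le_rfl (abs_sub_le _ _ _)
          _ = _ := by ring
      linarith
  · refine ⟨1, one_pos, fun a b _ g hg => absurd (htcov hg) ?_⟩
    rw [Set.not_nonempty_iff_eq_empty] at hne
    simp [hne]

/-- oscillation of `g` over the subinterval `[v,u]` of the unit interval. -/
def osc (g : C(Icc (0:ℝ) 1, ℝ)) (v u : Icc (0:ℝ) 1) : ℝ :=
  sSup ((fun p : Icc (0:ℝ) 1 × Icc (0:ℝ) 1 => |g p.1 - g p.2|) ''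
    {p | v ≤ p.1 ∧ p.1 ≤ u ∧ v ≤ p.2 ∧ p.2 ≤ u})

theorem osc_bddAbove (g : C(Icc (0:ℝ) 1, ℝ)) (v u : Icc (0:ℝ) 1) :
    BddAbove ((fun p : Icc (0:ℝ) 1 × Icc (0:ℝ) 1 => |g p.1 - g p.2|) ''
      {p | v ≤ p.1 ∧ p.1 ≤ u ∧ v ≤ p.2 ∧ p.2 ≤ u}) := by
  refine ⟨‖g‖ + ‖g‖, ?_⟩
  rintro r ⟨p, -, rfl⟩
  exact le_trans (abs_sub _ _) (add_le_add (g.norm_coe_le_norm p.1) (g.norm_coe_le_norm p.2))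

theorem le_osc {g : C(Icc (0:ℝ) 1, ℝ)} {v u a b : Icc (0:ℝ) 1}
    (h1 : v ≤ a) (h2 : a ≤ u) (h3 : v ≤ b) (h4 : b ≤ u) :
    |g a - g b| ≤ osc g v u :=
  le_csSup (osc_bddAbove g v u) ⟨(a, b), ⟨h1, h2, h3, h4⟩, rfl⟩

theorem osc_le {g : C(Icc (0:ℝ) 1, ℝ)} {v u : Icc (0:ℝ) 1} (hvu : v ≤ u) {c : ℝ}
    (hc : ∀ a b : Icc (0:ℝ) 1, v ≤ a → a ≤ u → v ≤ b → b ≤ u → |g a - g b| ≤ c) :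
    osc g v u ≤ c := by
  refine csSup_le ⟨|g v - g v|, ⟨(v, v), ⟨le_refl v, hvu, le_refl v, hvu⟩, rfl⟩⟩ ?_
  rintro r ⟨p, ⟨hp1, hp2, hp3, hp4⟩, rfl⟩
  exact hc _ _ hp1 hp2 hp3 hp4

theorem osc_nonneg {g : C(Icc (0:ℝ) 1, ℝ)} {v u : Icc (0:ℝ) 1} (hvu : v ≤ u) :
    0 ≤ osc g v u := by
  have := le_osc (g := g) (le_refl v) hvu (le_refl v) hvu
  simpa using this

theorem osc_le_osc_add {g g' : C(Icc (0:ℝ) 1, ℝ)} {v u : Icc (0:ℝ) 1} (hvu : v ≤ u) :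
    osc g v u ≤ osc g' v u + 2 * dist g g' := by
  refine osc_le hvu fun a b h1 h2 h3 h4 => ?_
  have e1 : |g a - g' a| ≤ dist g g' := by
    rw [← Real.dist_eq]; exact ContinuousMap.dist_apply_le_dist a
  have e2 : |g' b - g b| ≤ dist g g' := by
    rw [abs_sub_comm, ← Real.dist_eq]; exact ContinuousMap.dist_apply_le_dist b
  have e3 : |g' a - g' b| ≤ osc g' v u := le_osc h1 h2 h3 h4
  calc |g a - g b| ≤ |g a - g' a| + |g' a - g b| := abs_sub_le _ _ _
    _ ≤ |g a - g' a| + (|g' a - g' b| + |g' b - g b|) := add_le_add le_rfl (abs_sub_le _ _ _)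
    _ ≤ dist g g' + (osc g' v u + dist g g') := by
        exact add_le_add e1 (add_le_add e3 e2)
    _ = osc g' v u + 2 * dist g g' := by ring

theorem lipschitz_osc (v u : Icc (0:ℝ) 1) (hvu : v ≤ u) :
    LipschitzWith 2 (fun g : C(Icc (0:ℝ) 1, ℝ) => osc g v u) := by
  refine LipschitzWith.of_dist_le_mul fun g g' => ?_
  rw [Real.dist_eq, abs_sub_le_iff]
  constructor
  · have := osc_le_osc_add (g := g) (g' := g') hvu
    push_cast
    linarith
  · have := osc_le_osc_add (g := g') (g' := g) hvu
    rw [dist_comm] at this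
    push_cast
    linarith


theorem osc_small {g : C(Icc (0:ℝ) 1, ℝ)} {v u : Icc (0:ℝ) 1} (hvu : v ≤ u) {ε' δ : ℝ}
    (hne : (u:ℝ) - (v:ℝ) < δ)
    (H : ∀ a b : Icc (0:ℝ) 1, dist a b < δ → |g a - g b| < ε') :
    osc g v u ≤ ε' := by
  refine osc_le hvu fun a b h1 h2 h3 h4 => le_of_lt (H a b ?_)
  have c1 : (v:ℝ) ≤ (a:ℝ) := Subtype.coe_le_coe.2 h1
  have c2 : (a:ℝ) ≤ (u:ℝ) := Subtype.coe_le_coe.2 h2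
  have c3 : (v:ℝ) ≤ (b:ℝ) := Subtype.coe_le_coe.2 h3
  have c4 : (b:ℝ) ≤ (u:ℝ) := Subtype.coe_le_coe.2 h4
  rw [Subtype.dist_eq, Real.dist_eq, abs_lt]
  constructor <;> linarith

theorem tendsto_div_add_two (c : ℝ) :
    Filter.Tendsto (fun j : ℕ => c/((j:ℝ)+2)) atTop (nhds 0) := by
  refine Tendsto.div_atTop tendsto_const_nhds ?_
  exact tendsto_atTop_add_const_right _ 2 tendsto_natCast_atTop_atTop

section Stieltjes

variable {L : StieltjesFunction ℝ} {h f b : ℝ → ℝ}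

theorem integrableOn_Ioc_of_bounded (hhm : Measurable h) (hhb : ∀ s, |h s| ≤ 1)
    (a c : ℝ) : IntegrableOn h (Ioc a c) L.measure := by
  have hfin : L.measure (Ioc a c) < ∞ := by
    rw [L.measure_Ioc]; exact ENNReal.ofReal_lt_top
  haveI : IsFiniteMeasure (L.measure.restrict (Ioc a c)) :=
    ⟨by rwa [Measure.restrict_apply_univ]⟩
  refine (integrable_const (1:ℝ)).mono' hhm.aestronglyMeasurable.restrict ?_
  exact Eventually.of_forall fun s => by simpa using hhb s

theorem abs_setIntegral_Ioc_le (hhm : Measurable h) (hhb : ∀ s, |h s| ≤ 1)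
    {a c : ℝ} (hac : a ≤ c) :
    |∫ s in Ioc a c, h s ∂L.measure| ≤ L c - L a := by
  have hfin : L.measure (Ioc a c) < ∞ := by
    rw [L.measure_Ioc]; exact ENNReal.ofReal_lt_top
  have := norm_setIntegral_le_of_norm_le_const (μ := L.measure) (s := Ioc a c)
    (f := h) (C := 1) hfin (fun x _ => by simpa using hhb x)
  rw [Real.norm_eq_abs] at this
  refine le_trans this ?_
  rw [one_mul, measureReal_def, L.measure_Ioc, ENNReal.toReal_ofReal (sub_nonneg.2 (L.mono hac))]

theorem setIntegral_Ioc_add (hhm : Measurable h) (hhb : ∀ s, |h s| ≤ 1)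
    {a c d : ℝ} (h1 : a ≤ c) (h2 : c ≤ d) :
    (∫ s in Ioc a d, h s ∂L.measure) =
      (∫ s in Ioc a c, h s ∂L.measure) + ∫ s in Ioc c d, h s ∂L.measure := by
  rw [← Ioc_union_Ioc_eq_Ioc h1 h2]
  exact setIntegral_union (Set.Ioc_disjoint_Ioc_of_le le_rfl) measurableSet_Ioc
    (integrableOn_Ioc_of_bounded hhm hhb a c) (integrableOn_Ioc_of_bounded hhm hhb c d)

/-- On an interval whose interior contains no zero of `f`, a continuous Stieltjes function
carried by the zero set of `f` gives zero measure. -/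
theorem stieltjes_null_of_no_zero (hLc : Continuous L) (hcarr : CarriedBy L {s | f s = 0})
    {p q : ℝ} (hp : 0 ≤ p) (hpq : p ≤ q) (hz : ∀ r ∈ Ioo p q, f r ≠ 0) :
    L.measure (Ioc p q) = 0 := by
  suffices hLq : L q = L p by
    rw [L.measure_Ioc, hLq, sub_self, ENNReal.ofReal_zero]
  rcases eq_or_lt_of_le hpq with rfl | hpq'
  · rfl
  have h1 : ∀ a ∈ Ioo p q, ∀ c ∈ Ico a q, L c = L a := by
    rintro a ⟨hap, haq⟩ c ⟨hac, hcq⟩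
    set S := {e | e ∈ Icc a c ∧ L e ≤ L a} with hS
    have hSne : S.Nonempty := ⟨a, ⟨le_refl a, hac⟩, le_refl _⟩
    have hSbdd : BddAbove S := ⟨c, fun e he => he.1.2⟩
    have hSclosed : IsClosed S :=
      (isClosed_Icc.inter (isClosed_le hLc continuous_const) : IsClosed (Icc a c ∩ _))
    have hmem : sSup S ∈ S := hSclosed.csSup_mem hSne hSbdd
    have hsup_eq : sSup S = c := by
      by_contra hne
      have hlt : sSup S < c := lt_of_le_of_ne hmem.1.2 hne
      have hin : sSup S ∈ Ioo p q :=
        ⟨lt_of_lt_of_le hap hmem.1.1, lt_of_lt_of_le hlt hcq.le⟩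
      obtain ⟨ε, hε0, hεconst⟩ := hcarr (sSup S) (le_trans hp hin.1.le) (hz _ hin)
      set c' := min c (sSup S + ε/2) with hc'
      have hc'gt : sSup S < c' := lt_min hlt (by linarith)
      have hc'mem : c' ∈ S := by
        refine ⟨⟨le_trans hmem.1.1 hc'gt.le, min_le_left _ _⟩, ?_⟩
        have : L c' = L (sSup S) := by
          refine hεconst c' ⟨by linarith [hc'gt], ?_⟩
          calc c' ≤ sSup S + ε/2 := min_le_right _ _
            _ < sSup S + ε := by linarith
        rw [this]; exact hmem.2
      exact absurd (le_csSup hSbdd hc'mem) (not_le.2 hc'gt)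
    have : L c ≤ L a := by rw [← hsup_eq]; exact hmem.2
    exact le_antisymm this (L.mono hac)
  have h2 : ∀ a ∈ Ioo p q, L q = L a := by
    rintro a ⟨hap, haq⟩
    have hseq : ∀ j : ℕ, L (q - (q - a)/(j+2)) = L a := by
      intro j
      refine h1 a ⟨hap, haq⟩ _ ⟨?_, ?_⟩
      · have hj : (q - a)/(j+2) ≤ (q - a) := by
          rw [div_le_iff₀ (by positivity)]
          nlinarith [sub_pos.2 haq]
        linarith
      · have : 0 < (q - a)/(j+2) := div_pos (sub_pos.2 haq) (by positivity)
        linarith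
    have htend : Tendsto (fun j : ℕ => q - (q - a)/(j+2)) atTop (nhds q) := by
      have := Tendsto.sub (tendsto_const_nhds : Tendsto (fun _ : ℕ => q) atTop (nhds q))
        (tendsto_div_add_two (q - a))
      simpa using this
    have hLtend : Tendsto (fun j : ℕ => L (q - (q - a)/(j+2))) atTop (nhds (L q)) :=
      (hLc.continuousAt.tendsto).comp htend
    have : Tendsto (fun _ : ℕ => L a) atTop (nhds (L q)) := by
      refine hLtend.congr fun j => (hseq j)
    exact (tendsto_nhds_unique tendsto_const_nhds this).symm
  -- now let a → p
  have hseq : ∀ j : ℕ, L q = L (p + (q - p)/(j+2)) := by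
    intro j
    refine h2 _ ⟨?_, ?_⟩
    · have : 0 < (q - p)/(j+2) := div_pos (sub_pos.2 hpq') (by positivity)
      linarith
    · have hj : (q - p)/(j+2) < (q - p) := by
        rw [div_lt_iff₀ (by positivity)]
        nlinarith [sub_pos.2 hpq']
      linarith
  have htend : Tendsto (fun j : ℕ => p + (q - p)/(j+2)) atTop (nhds p) := by
    have := Tendsto.add (tendsto_const_nhds : Tendsto (fun _ : ℕ => p) atTop (nhds p))
      (tendsto_div_add_two (q - p))
    simpa using this
  have hLtend : Tendsto (fun j : ℕ => L (p + (q - p)/(j+2))) atTop (nhds (L p)) :=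
    (hLc.continuousAt.tendsto).comp htend
  have : Tendsto (fun _ : ℕ => L q) atTop (nhds (L p)) := by
    refine hLtend.congr fun j => (hseq j).symm
  exact tendsto_nhds_unique tendsto_const_nhds this

/-- continuity of `t ↦ ∫_{(0,t]} h dL`. -/
theorem continuous_setIntegral_Ioc (hLc : Continuous L) (hhm : Measurable h)
    (hhb : ∀ s, |h s| ≤ 1) :
    Continuous (fun t => ∫ s in Ioc (0:ℝ) t, h s ∂L.measure) := by
  set A : ℝ → ℝ := fun t => ∫ s in Ioc (0:ℝ) t, h s ∂L.measure with hA
  have key : ∀ s t : ℝ, s ≤ t → |A t - A s| ≤ L t - L s := by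
    intro s t hst
    rcases le_or_gt t 0 with ht | ht
    · have hs' : Ioc (0:ℝ) s = ∅ := Ioc_eq_empty (by intro hlt; linarith)
      have ht' : Ioc (0:ℝ) t = ∅ := Ioc_eq_empty (by intro hlt; linarith)
      simp only [hA, hs', ht', Measure.restrict_empty, integral_zero_measure]
      simpa using sub_nonneg.2 (L.mono hst)
    · rcases le_or_gt s 0 with hs | hs
      · have hs' : Ioc (0:ℝ) s = ∅ := Ioc_eq_empty (by intro hlt; linarith)
        have : A s = 0 := by simp [hA, hs', Measure.restrict_empty]
        rw [this, sub_zero]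
        refine le_trans (abs_setIntegral_Ioc_le hhm hhb ht.le) ?_
        have := L.mono hs
        linarith
      · have h3 : A t = A s + ∫ u in Ioc s t, h u ∂L.measure :=
          setIntegral_Ioc_add (L := L) hhm hhb hs.le hst
        rw [h3, add_sub_cancel_left]
        exact abs_setIntegral_Ioc_le hhm hhb hst
  have key' : ∀ s t : ℝ, |A t - A s| ≤ |L t - L s| := by
    intro s t
    rcases le_total s t with hst | hst
    · exact le_trans (key s t hst) (le_abs_self _)
    · rw [abs_sub_comm, abs_sub_comm (L t)]
      exact le_trans (key t s hst) (le_abs_self _)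
  rw [continuous_iff_continuousAt]
  intro p
  rw [ContinuousAt, tendsto_iff_dist_tendsto_zero]
  have hb : Tendsto (fun t => |L t - L p|) (nhds p) (nhds 0) := by
    have : Tendsto (fun t => L t - L p) (nhds p) (nhds (L p - L p)) :=
      (hLc.tendsto p).sub tendsto_const_nhds
    rw [sub_self] at this
    simpa using this.abs
  refine squeeze_zero (fun t => dist_nonneg) (fun t => ?_) hb
  rw [Real.dist_eq]
  exact key' p t

end Stieltjes

section Key

theorem setIntegral_null {α : Type*} {m : MeasurableSpace α} {μ : Measure α} {s : Set α}
    (hs : μ s = 0) (f : α → ℝ) : ∫ x in s, f x ∂μ = 0 := by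
  rw [Measure.restrict_eq_zero.2 hs]
  exact integral_zero_measure _

variable {L : StieltjesFunction ℝ} {h f b : ℝ → ℝ} {x : ℝ}

/-- Key pathwise decomposition: the finite-variation part moves only between the first and
last zero of `f`, where its increment is expressible through `b`. -/
theorem key_decomp (hLc : Continuous L) (hhm : Measurable h) (hhb : ∀ s, |h s| ≤ 1)
    (hf : Continuous f) (hcarr : CarriedBy L {s | f s = 0})
    (heq : ∀ t : ℝ, 0 ≤ t → f t = x + b t + ∫ s in Ioc (0:ℝ) t, h s ∂L.measure)
    {v u : ℝ} (hv : 0 ≤ v) (hvu : v ≤ u) :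
    ∃ z1 ∈ Icc v u, ∃ z2 ∈ Icc v u,
      (∫ s in Ioc (0:ℝ) u, h s ∂L.measure) - (∫ s in Ioc (0:ℝ) v, h s ∂L.measure)
        = b z1 - b z2 := by
  set A : ℝ → ℝ := fun t => ∫ s in Ioc (0:ℝ) t, h s ∂L.measure with hA
  set Z : Set ℝ := {z | z ∈ Icc v u ∧ f z = 0} with hZ
  by_cases hZne : Z.Nonempty
  · have hZclosed : IsClosed Z := isClosed_Icc.inter (isClosed_eq hf continuous_const)
    have hZbddb : BddBelow Z := ⟨v, fun z hz => hz.1.1⟩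
    have hZbdda : BddAbove Z := ⟨u, fun z hz => hz.1.2⟩
    set z1 := sInf Z with hz1
    set z2 := sSup Z with hz2
    have hz1mem : z1 ∈ Z := hZclosed.csInf_mem hZne hZbddb
    have hz2mem : z2 ∈ Z := hZclosed.csSup_mem hZne hZbdda
    have hvz1 : v ≤ z1 := hz1mem.1.1
    have hz2u : z2 ≤ u := hz2mem.1.2
    have hz12 : z1 ≤ z2 := csInf_le_csSup hZne hZbddb hZbdda
    have h0z1 : 0 ≤ z1 := le_trans hv hvz1
    have h0z2 : 0 ≤ z2 := le_trans h0z1 hz12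
    refine ⟨z1, hz1mem.1, z2, hz2mem.1, ?_⟩
    have hn1 : L.measure (Ioc v z1) = 0 := by
      refine stieltjes_null_of_no_zero hLc hcarr hv hvz1 ?_
      rintro r ⟨hr1, hr2⟩ hr0
      have : r ∈ Z := ⟨⟨hr1.le, le_trans hr2.le (le_trans hz12 hz2u)⟩, hr0⟩
      exact absurd (csInf_le hZbddb this) (not_le.2 hr2)
    have hn2 : L.measure (Ioc z2 u) = 0 := by
      refine stieltjes_null_of_no_zero hLc hcarr h0z2 hz2u ?_
      rintro r ⟨hr1, hr2⟩ hr0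
      have : r ∈ Z := ⟨⟨le_trans hvz1 (le_trans hz12 hr1.le), hr2.le⟩, hr0⟩
      exact absurd (le_csSup hZbdda this) (not_le.2 hr1)
    have e1 : A z1 - A v = 0 := by
      have h3 : A z1 = A v + ∫ s in Ioc v z1, h s ∂L.measure :=
        setIntegral_Ioc_add (L := L) hhm hhb hv hvz1
      rw [h3, setIntegral_null hn1]; ring
    have e2 : A u - A z2 = 0 := by
      have h3 : A u = A z2 + ∫ s in Ioc z2 u, h s ∂L.measure :=
        setIntegral_Ioc_add (L := L) hhm hhb h0z2 hz2u
      rw [h3, setIntegral_null hn2]; ring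
    have e3 : A z2 - A z1 = b z1 - b z2 := by
      have q1 := heq z1 h0z1
      have q2 := heq z2 h0z2
      rw [hz1mem.2] at q1
      rw [hz2mem.2] at q2
      have : A z1 = - x - b z1 := by rw [hA]; linarith
      have : A z2 = - x - b z2 := by rw [hA]; linarith
      linarith [q1, q2]
    have : A u - A v = b z1 - b z2 := by linarith
    exact this
  · refine ⟨v, ⟨le_refl v, hvu⟩, v, ⟨le_refl v, hvu⟩, ?_⟩
    have hn : L.measure (Ioc v u) = 0 := by
      refine stieltjes_null_of_no_zero hLc hcarr hv hvu ?_
      rintro r ⟨hr1, hr2⟩ hr0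
      exact hZne ⟨r, ⟨hr1.le, hr2.le⟩, hr0⟩
    have h3 : A u = A v + ∫ s in Ioc v u, h s ∂L.measure :=
      setIntegral_Ioc_add (L := L) hhm hhb hv hvu
    show A u - A v = b v - b v
    rw [h3, setIntegral_null hn]; ring

/-- extension of the a.e.-per-time identity from rationals to all nonnegative reals. -/
theorem eq_of_rat (hfc : Continuous f) (hbc : Continuous b)
    {A : ℝ → ℝ} (hAc : Continuous A)
    (heqQ : ∀ q : ℚ, (0:ℝ) ≤ q → f q = x + b q + A q)
    {t : ℝ} (ht : 0 ≤ t) : f t = x + b t + A t := by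
  have hq : ∀ k : ℕ, ∃ q : ℚ, t < q ∧ (q:ℝ) < t + 1/(k+1) := by
    intro k
    refine exists_rat_btwn ?_
    have : (0:ℝ) < 1/((k:ℝ)+1) := by positivity
    linarith
  choose q hq1 hq2 using hq
  have htend : Tendsto (fun k : ℕ => (q k : ℝ)) atTop (nhds t) := by
    have hb1 : Tendsto (fun k : ℕ => t + 1/((k:ℝ)+1)) atTop (nhds t) := by
      have := Tendsto.add (tendsto_const_nhds : Tendsto (fun _ : ℕ => t) atTop (nhds t))
        tendsto_one_div_add_atTop_nhds_zero_nat
      simpa using this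
    exact tendsto_of_tendsto_of_tendsto_of_le_of_le tendsto_const_nhds hb1
      (fun k => (hq1 k).le) (fun k => (hq2 k).le)
  have h1 : Tendsto (fun k : ℕ => f (q k)) atTop (nhds (f t)) :=
    (hfc.tendsto t).comp htend
  have h2 : Tendsto (fun k : ℕ => x + b (q k) + A (q k)) atTop (nhds (x + b t + A t)) := by
    exact Tendsto.add (Tendsto.add tendsto_const_nhds ((hbc.tendsto t).comp htend))
      ((hAc.tendsto t).comp htend)
  have h3 : Tendsto (fun k : ℕ => f (q k)) atTop (nhds (x + b t + A t)) := by
    refine h2.congr fun k => ?_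
    exact (heqQ (q k) (le_trans ht (hq1 k).le)).symm
  exact tendsto_nhds_unique h1 h3

end Key

end AuxTightness

open scoped Classical in
/-- The path of `B` alone on `[0,1]`, as a continuous map (junk value otherwise). -/
def bPath (B : ℝ → Ω → ℝ) (ω : Ω) : C(Icc (0:ℝ) 1, ℝ) :=
  if h : Continuous (fun s : Icc (0:ℝ) 1 => B (s : ℝ) ω) then ⟨_, h⟩
  else ContinuousMap.const _ 0


/-- if `α_n` are piecewise constant, converging pointwise to `α`, and
`X^n` are the corresponding ISBM solutions started at `x` with the common Brownian
motion `B`, then the family of laws of `(X^n, B)` on `C([0,1], ℝ²)` is tight. -/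
theorem isbm_tightness
    {mΩ : MeasurableSpace Ω} (μ : Measure Ω) [IsProbabilityMeasure μ]
    (αseq : ℕ → ℝ → ℝ) (α : ℝ → ℝ) (hα_meas : Measurable α)
    (hαn_range : ∀ n s, αseq n s ∈ Icc (0:ℝ) 1)
    (hpc : ∀ n, ∃ m : ℕ, 0 < m ∧ ∃ τ a : ℕ → ℝ, τ 0 = 0 ∧ τ m = 1 ∧
      (∀ i < m, τ i < τ (i + 1)) ∧
      ∀ s, αseq n s = ∑ i ∈ Finset.range m,
        Set.indicator (Ico (τ i) (τ (i + 1))) (fun _ => a i) s)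
    (hconv : ∀ t ∈ Icc (0:ℝ) 1, Tendsto (fun n => αseq n t) atTop (nhds (α t)))
    (x : ℝ) (B : ℝ → Ω → ℝ) (hB : IsBrownianMotion μ B)
    (X : ℕ → ℝ → Ω → ℝ) (Lseq : ℕ → Ω → StieltjesFunction ℝ)
    (hXn : ∀ n, IsISBMSolution μ (αseq n) x B (X n) (Lseq n))
    (hXn_meas : ∀ n t, Measurable (X n t)) :
    ∀ δ : ℝ, 0 < δ → ∃ K : Set C(Icc (0:ℝ) 1, ℝ × ℝ), IsCompact K ∧
      ∀ n, @Measure.map Ω C(Icc (0:ℝ) 1, ℝ × ℝ) mΩ (borel _)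
        (pathPair (X n) B) μ Kᶜ ≤ ENNReal.ofReal δ := by
  intro δ hδ
  classical
  letI mC2 : MeasurableSpace C(Icc (0:ℝ) 1, ℝ × ℝ) := borel _
  haveI hbs2 : BorelSpace C(Icc (0:ℝ) 1, ℝ × ℝ) := ⟨rfl⟩
  letI mC1 : MeasurableSpace C(Icc (0:ℝ) 1, ℝ) := borel _
  haveI hbs1 : BorelSpace C(Icc (0:ℝ) 1, ℝ) := ⟨rfl⟩
  -- measurability and boundedness of the drift coefficients
  have hmeas_h : ∀ n, Measurable (fun s => 2 * αseq n s - 1) := by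
    intro n
    obtain ⟨m, hm0, τ, a, hτ0, hτm, hτmono, hrep⟩ := hpc n
    have hα : Measurable (αseq n) := by
      have hfe : αseq n = fun s => ∑ i ∈ Finset.range m,
          Set.indicator (Ico (τ i) (τ (i+1))) (fun _ => a i) s := funext hrep
      rw [hfe]
      exact Finset.measurable_sum _ fun i _ =>
        (measurable_const.indicator measurableSet_Ico)
    exact (hα.const_mul 2).sub measurable_const
  have hbd_h : ∀ n s, |2 * αseq n s - 1| ≤ 1 := by
    intro n s
    have h1 := (hαn_range n s).1
    have h2 := (hαn_range n s).2
    rw [abs_le]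
    constructor <;> linarith
  -- the a.s. "good" event for each n
  set P : ℕ → Ω → Prop := fun n ω =>
    (Continuous fun t => X n t ω) ∧
    (B 0 ω = 0 ∧ Continuous fun t => B t ω) ∧
    ((Lseq n ω) 0 = 0 ∧ (Continuous fun s => (Lseq n ω) s) ∧
      CarriedBy (fun s => (Lseq n ω) s) {s : ℝ | X n s ω = 0}) ∧
    (∀ q : ℚ, (0:ℝ) ≤ (q:ℝ) → X n (q:ℝ) ω =
      x + B (q:ℝ) ω + ∫ s in Ioc (0:ℝ) (q:ℝ), (2 * αseq n s - 1) ∂(Lseq n ω).measure)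
    with hP
  have hgood : ∀ n, ∀ᵐ ω ∂μ, P n ω := by
    intro n
    obtain ⟨hcont, hslt, heqae⟩ := hXn n
    refine hcont.and (hB.2.1.and (hslt.1.and ?_))
    rw [ae_all_iff]
    intro q
    by_cases hq : (0:ℝ) ≤ (q:ℝ)
    · filter_upwards [heqae q hq] with ω hω _
      exact hω
    · exact Eventually.of_forall fun ω h => absurd h hq
  -- postcomposition with the projections
  have hsndc_cont : Continuous (fun F : C(Icc (0:ℝ) 1, ℝ × ℝ) =>
      (ContinuousMap.mk Prod.snd continuous_snd).comp F) :=
    ContinuousMap.continuous_postcomp _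
  rcases Classical.em (∃ n₀, AEMeasurable (pathPair (X n₀) B) μ) with hex | hex
  swap
  · push_neg at hex
    refine ⟨{ContinuousMap.const _ (0,0)}, isCompact_singleton, fun n => ?_⟩
    rw [Measure.map_of_not_aemeasurable (hex n)]
    simp only [Measure.coe_zero, Pi.zero_apply]
    exact zero_le
  obtain ⟨n₀, hn₀⟩ := hex
  -- the path of B is a.e. measurable
  have hbPath_ae : AEMeasurable (bPath B) μ := by
    have hmm : Measurable (fun F : C(Icc (0:ℝ) 1, ℝ × ℝ) =>
        (ContinuousMap.mk Prod.snd continuous_snd).comp F) := hsndc_cont.measurable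
    refine AEMeasurable.congr (hmm.comp_aemeasurable hn₀) ?_
    filter_upwards [hgood n₀] with ω hω
    obtain ⟨hXc, ⟨hB0, hBc⟩, -, -⟩ := hω
    have hXc' : Continuous fun s : Icc (0:ℝ) 1 => X n₀ (s:ℝ) ω :=
      hXc.comp continuous_subtype_val
    have hBc' : Continuous fun s : Icc (0:ℝ) 1 => B (s:ℝ) ω :=
      hBc.comp continuous_subtype_val
    have hpair : Continuous fun s : Icc (0:ℝ) 1 => (X n₀ (s:ℝ) ω, B (s:ℝ) ω) :=
      hXc'.prodMk hBc'
    show (ContinuousMap.mk Prod.snd continuous_snd).comp (pathPair (X n₀) B ω) = bPath B ω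
    rw [pathPair, dif_pos hpair, bPath, dif_pos hBc']
    rfl
  -- the law of the path of B, and a compact set carrying most of it
  set ν : Measure C(Icc (0:ℝ) 1, ℝ) := Measure.map (bPath B) μ with hν
  haveI : IsFiniteMeasure ν := ⟨by
    rw [hν, Measure.map_apply_of_aemeasurable hbPath_ae MeasurableSet.univ,
      Set.preimage_univ]
    exact measure_lt_top μ univ⟩
  obtain ⟨KB, hKBcomp, hKBle⟩ :=
    exists_compact_measure_compl_le ν (ENNReal.ofReal_pos.2 hδ)
  obtain ⟨M, hM⟩ := isBounded_iff_forall_norm_le.1 hKBcomp.isBounded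
  -- the compact set of pair paths
  set pt0 : Icc (0:ℝ) 1 := ⟨0, by constructor <;> norm_num⟩ with hpt0
  set sndc : C(Icc (0:ℝ) 1, ℝ × ℝ) → C(Icc (0:ℝ) 1, ℝ) :=
    fun F => (ContinuousMap.mk Prod.snd continuous_snd).comp F with hsndc
  set fstc : C(Icc (0:ℝ) 1, ℝ × ℝ) → C(Icc (0:ℝ) 1, ℝ) :=
    fun F => (ContinuousMap.mk Prod.fst continuous_fst).comp F with hfstc
  set K : Set C(Icc (0:ℝ) 1, ℝ × ℝ) := {F | sndc F ∈ KB ∧ fstc F pt0 = x ∧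
    ∀ v u : Icc (0:ℝ) 1, v ≤ u → |fstc F u - fstc F v| ≤ 2 * osc (sndc F) v u} with hK
  have hfstc_cont : Continuous fstc := ContinuousMap.continuous_postcomp _
  have hKclosed : IsClosed K := by
    have h1 : IsClosed {F : C(Icc (0:ℝ) 1, ℝ × ℝ) | sndc F ∈ KB} :=
      hKBcomp.isClosed.preimage hsndc_cont
    have h2 : IsClosed {F : C(Icc (0:ℝ) 1, ℝ × ℝ) | fstc F pt0 = x} := by
      have hc : Continuous fun F : C(Icc (0:ℝ) 1, ℝ × ℝ) => fstc F pt0 :=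
        (continuous_eval_const pt0).comp hfstc_cont
      exact isClosed_eq hc continuous_const
    have h3 : IsClosed {F : C(Icc (0:ℝ) 1, ℝ × ℝ) | ∀ v u : Icc (0:ℝ) 1, v ≤ u →
        |fstc F u - fstc F v| ≤ 2 * osc (sndc F) v u} := by
      have hrw : {F : C(Icc (0:ℝ) 1, ℝ × ℝ) | ∀ v u : Icc (0:ℝ) 1, v ≤ u →
          |fstc F u - fstc F v| ≤ 2 * osc (sndc F) v u}
          = ⋂ (v : Icc (0:ℝ) 1), ⋂ (u : Icc (0:ℝ) 1), ⋂ (_ : v ≤ u),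
            {F : C(Icc (0:ℝ) 1, ℝ × ℝ) | |fstc F u - fstc F v| ≤ 2 * osc (sndc F) v u} := by
        ext F
        simp only [Set.mem_setOf_eq, Set.mem_iInter]
      rw [hrw]
      refine isClosed_iInter fun v => isClosed_iInter fun u => isClosed_iInter fun hvu => ?_
      have hc1 : Continuous fun F : C(Icc (0:ℝ) 1, ℝ × ℝ) => |fstc F u - fstc F v| :=
        (((continuous_eval_const u).comp hfstc_cont).sub
          ((continuous_eval_const v).comp hfstc_cont)).abs
      have hc2 : Continuous fun F : C(Icc (0:ℝ) 1, ℝ × ℝ) => 2 * osc (sndc F) v u :=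
        continuous_const.mul (((lipschitz_osc v u hvu).continuous).comp hsndc_cont)
      exact isClosed_le hc1 hc2
    exact h1.inter (h2.inter h3)
  have hKcompact : IsCompact K := by
    set e := (ContinuousMap.isometryEquivBoundedOfCompact (Icc (0:ℝ) 1) (ℝ × ℝ)).toHomeomorph
      with he
    rw [← Homeomorph.isCompact_image (h := e)]
    have hcoe : ∀ G : C(Icc (0:ℝ) 1, ℝ × ℝ), ⇑(e G) = ⇑G := fun G => rfl
    refine BoundedContinuousFunction.arzela_ascoli₂
      (Icc (-(|x| + 4*M)) (|x| + 4*M) ×ˢ Icc (-M) M)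
      (isCompact_Icc.prod isCompact_Icc) (⇑e '' K) (e.isClosedMap _ hKclosed) ?_ ?_
    · rintro f pt ⟨G, hG, rfl⟩
      obtain ⟨hGB, hG0, hGmod⟩ := hG
      have hMsnd : ∀ w : Icc (0:ℝ) 1, |sndc G w| ≤ M :=
        fun w => le_trans ((sndc G).norm_coe_le_norm w) (hM _ hGB)
      have hpt0le : pt0 ≤ pt := Subtype.coe_le_coe.1 (by exact pt.2.1)
      have hosc : osc (sndc G) pt0 pt ≤ 2*M := by
        refine osc_le hpt0le fun a b _ _ _ _ => ?_
        have := hMsnd a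
        have := hMsnd b
        have h5 : |sndc G a - sndc G b| ≤ |sndc G a| + |sndc G b| := abs_sub _ _
        linarith
      have hfst : |fstc G pt| ≤ |x| + 4*M := by
        have h6 := hGmod pt0 pt hpt0le
        have h7 : |fstc G pt| ≤ |fstc G pt0| + |fstc G pt - fstc G pt0| := by
          have := abs_sub_abs_le_abs_sub (fstc G pt) (fstc G pt0)
          linarith [abs_nonneg (fstc G pt0)]
        rw [hG0] at h6 h7
        linarith
      constructor
      · show (G pt).1 ∈ Icc (-(|x| + 4*M)) (|x| + 4*M)
        rw [Set.mem_Icc]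
        have := abs_le.1 hfst
        exact this
      · show (G pt).2 ∈ Icc (-M) M
        rw [Set.mem_Icc]
        exact abs_le.1 (hMsnd pt)
    · intro x₀
      rw [Metric.equicontinuousAt_iff]
      intro ε hε
      obtain ⟨δ1, hδ1, hKB1⟩ := compact_unif_equicont hKBcomp (show 0 < ε/3 by positivity)
      refine ⟨δ1, hδ1, fun y hy i => ?_⟩
      obtain ⟨f, hf⟩ := i
      obtain ⟨G, hG, rfl⟩ := hf
      show dist (G x₀) (G y) < ε
      have hdist : |(y:ℝ) - (x₀:ℝ)| < δ1 := by
        rw [Subtype.dist_eq, Real.dist_eq] at hy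
        exact hy
      have hoscb : ∀ v u : Icc (0:ℝ) 1, v ≤ u → ((u:ℝ) - (v:ℝ) < δ1) →
          |fstc G u - fstc G v| ≤ 2*(ε/3) := by
        intro v u hvu hlt
        refine le_trans (hG.2.2 v u hvu) ?_
        have hos : osc (sndc G) v u ≤ ε/3 :=
          osc_small hvu hlt (fun a b hab => hKB1 a b hab (sndc G) hG.1)
        linarith
      rw [Prod.dist_eq]
      refine max_lt ?_ ?_
      · show dist (fstc G x₀) (fstc G y) < ε
        rw [Real.dist_eq]
        rcases le_total x₀ y with hle | hle
        · have h3 := hoscb x₀ y hle (by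
            have := abs_lt.1 hdist
            linarith [this.1, this.2])
          rw [abs_sub_comm] at h3
          linarith
        · have h3 := hoscb y x₀ hle (by
            have := abs_lt.1 hdist
            linarith [this.1, this.2])
          linarith
      · show dist (sndc G x₀) (sndc G y) < ε
        rw [Real.dist_eq]
        have := hKB1 x₀ y (by rw [Subtype.dist_eq, Real.dist_eq, abs_sub_comm]; exact hdist)
          (sndc G) hG.1
        linarith
  refine ⟨K, hKcompact, fun n => ?_⟩
  rcases Classical.em (AEMeasurable (pathPair (X n) B) μ) with hmn | hmn
  swap
  · rw [Measure.map_of_not_aemeasurable hmn]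
    simp only [Measure.coe_zero, Pi.zero_apply]
    exact zero_le
  rw [Measure.map_apply_of_aemeasurable hmn hKcompact.isClosed.measurableSet.compl]
  have hsub : pathPair (X n) B ⁻¹' Kᶜ ⊆ {ω | ¬ P n ω} ∪ bPath B ⁻¹' KBᶜ := by
    intro ω hω
    rw [Set.mem_union]
    by_contra hcon
    push_neg at hcon
    obtain ⟨hPmem, hKBmem'⟩ := hcon
    have hPn : P n ω := by simpa using hPmem
    have hKBmem : bPath B ω ∈ KB := by
      have := hKBmem'
      rw [Set.mem_preimage, Set.mem_compl_iff, not_not] at this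
      exact this
    obtain ⟨hXc, ⟨hB0, hBc⟩, ⟨hL0, hLcont, hLcarr⟩, heqQ⟩ := hPn
    have hXc' : Continuous fun s : Icc (0:ℝ) 1 => X n (s:ℝ) ω :=
      hXc.comp continuous_subtype_val
    have hBc' : Continuous fun s : Icc (0:ℝ) 1 => B (s:ℝ) ω :=
      hBc.comp continuous_subtype_val
    have hpair : Continuous fun s : Icc (0:ℝ) 1 => (X n (s:ℝ) ω, B (s:ℝ) ω) :=
      hXc'.prodMk hBc'
    have hpp : pathPair (X n) B ω = ContinuousMap.mk _ hpair := by
      rw [pathPair, dif_pos hpair]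
    have hbp : bPath B ω = ContinuousMap.mk _ hBc' := by
      rw [bPath, dif_pos hBc']
    have hsndeq : sndc (pathPair (X n) B ω) = bPath B ω := by
      rw [hpp, hbp]; rfl
    have hfst_eval : ∀ w : Icc (0:ℝ) 1, fstc (pathPair (X n) B ω) w = X n (w:ℝ) ω :=
      fun w => by rw [hpp]; rfl
    have hsnd_eval : ∀ w : Icc (0:ℝ) 1, (bPath B ω) w = B (w:ℝ) ω :=
      fun w => by rw [hbp]; rfl
    have hAc : Continuous (fun t : ℝ =>
        ∫ s in Ioc (0:ℝ) t, (2 * αseq n s - 1) ∂(Lseq n ω).measure) :=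
      continuous_setIntegral_Ioc hLcont (hmeas_h n) (hbd_h n)
    have heqall : ∀ t : ℝ, 0 ≤ t → X n t ω =
        x + B t ω + ∫ s in Ioc (0:ℝ) t, (2 * αseq n s - 1) ∂(Lseq n ω).measure :=
      fun t ht => eq_of_rat hXc hBc hAc (fun q hq => heqQ q hq) ht
    refine hω ?_
    refine ⟨by rw [hsndeq]; exact hKBmem, ?_, ?_⟩
    · rw [hfst_eval pt0]
      have h0 := heqall 0 le_rfl
      have hA0 : (∫ s in Ioc (0:ℝ) 0, (2 * αseq n s - 1) ∂(Lseq n ω).measure) = 0 := by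
        rw [Set.Ioc_self, Measure.restrict_empty, integral_zero_measure]
      rw [hB0, hA0] at h0
      show X n ((pt0 : ℝ)) ω = x
      rw [show ((pt0 : ℝ)) = 0 from rfl, h0]
      ring
    · intro v u hvu
      obtain ⟨z1, hz1, z2, hz2, hkey⟩ :=
        key_decomp hLcont (hmeas_h n) (hbd_h n) hXc hLcarr heqall v.2.1
          (Subtype.coe_le_coe.2 hvu)
      have hz1' : z1 ∈ Icc (0:ℝ) 1 := ⟨le_trans v.2.1 hz1.1, le_trans hz1.2 u.2.2⟩
      have hz2' : z2 ∈ Icc (0:ℝ) 1 := ⟨le_trans v.2.1 hz2.1, le_trans hz2.2 u.2.2⟩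
      set a1 : Icc (0:ℝ) 1 := ⟨z1, hz1'⟩ with ha1
      set a2 : Icc (0:ℝ) 1 := ⟨z2, hz2'⟩ with ha2
      have hfu := heqall u u.2.1
      have hfv := heqall v v.2.1
      have e0 : X n (u:ℝ) ω - X n (v:ℝ) ω =
          (B (u:ℝ) ω - B (v:ℝ) ω) + (B z1 ω - B z2 ω) := by
        rw [hfu, hfv]
        linarith [hkey]
      have o1 : |B (u:ℝ) ω - B (v:ℝ) ω| ≤ osc (bPath B ω) v u := by
        have := le_osc (g := bPath B ω) (a := u) (b := v) hvu le_rfl le_rfl hvu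
        rw [hsnd_eval, hsnd_eval] at this
        exact this
      have o2 : |B z1 ω - B z2 ω| ≤ osc (bPath B ω) v u := by
        have := le_osc (g := bPath B ω) (a := a1) (b := a2)
          (Subtype.coe_le_coe.1 hz1.1) (Subtype.coe_le_coe.1 hz1.2)
          (Subtype.coe_le_coe.1 hz2.1) (Subtype.coe_le_coe.1 hz2.2)
        rw [hsnd_eval, hsnd_eval] at this
        exact this
      rw [hfst_eval, hfst_eval, hsndeq]
      have habs : |X n (u:ℝ) ω - X n (v:ℝ) ω| ≤
          |B (u:ℝ) ω - B (v:ℝ) ω| + |B z1 ω - B z2 ω| := by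
        rw [e0]
        exact abs_add_le _ _
      linarith
  calc μ (pathPair (X n) B ⁻¹' Kᶜ)
      ≤ μ ({ω | ¬ P n ω} ∪ bPath B ⁻¹' KBᶜ) := measure_mono hsub
    _ ≤ μ {ω | ¬ P n ω} + μ (bPath B ⁻¹' KBᶜ) := measure_union_le _ _
    _ ≤ ENNReal.ofReal δ := by
        have hz : μ {ω | ¬ P n ω} = 0 := by
          have := hgood n
          rwa [MeasureTheory.ae_iff] at this
        rw [hz, zero_add, ← Measure.map_apply_of_aemeasurable hbPath_ae
          hKBcomp.isClosed.measurableSet.compl] at *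
        exact hKBle


end ISBM
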